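/- Let (C,D) with C = C_1 ⊕ ... ⊕ C_t and D = D_1 ⊕ ... ⊕ D_t be a block-diagonal pair, and let (P,Q) be a conformally partitioned parameter pair. Then the simple deformation (C+P, D+Q) satisfies the versality condition for contragredient equivalence if and only if for each pair of indices (i,j) and every pair (M_{ij}, N_{ij}) of the size of the (i,j) blocks there exist matrices S_{ij}, R_{ij} and a specialization (P_{ij}, Q_{ij}) of the parameter blocks such that (M_{ij}, N_{ij}) + (C_i R_{ij} − S_{ij} C_j, D_i S_{ij} − R_{ij} D_j) = (P_{ij}, Q_{ij}). -/

import Mathlib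

open Matrix


lemma bd_mul_apply {t : ℕ} {m n : Fin t → ℕ} {κ : Type*} [Fintype κ]
    (C : ∀ i, Matrix (Fin (m i)) (Fin (n i)) ℂ)
    (R : Matrix ((i : Fin t) × Fin (n i)) κ ℂ) (i : Fin t) (a : Fin (m i)) (q : κ) :
    (blockDiagonal' C * R) ⟨i, a⟩ q = ∑ c, C i a c * R ⟨i, c⟩ q := by
  classical
  rw [Matrix.mul_apply, ← Finset.univ_sigma_univ, Finset.sum_sigma]
  rw [Finset.sum_eq_single i]
  · simp
  · intro k _ hk
    apply Finset.sum_eq_zero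
    intro c _
    rw [blockDiagonal'_apply_ne _ _ _ (Ne.symm hk), zero_mul]
  · simp

lemma mul_bd_apply {t : ℕ} {m n : Fin t → ℕ} {κ : Type*} [Fintype κ]
    (C : ∀ i, Matrix (Fin (m i)) (Fin (n i)) ℂ)
    (S : Matrix κ ((i : Fin t) × Fin (m i)) ℂ) (p : κ) (j : Fin t) (b : Fin (n j)) :
    (S * blockDiagonal' C) p ⟨j, b⟩ = ∑ c, S p ⟨j, c⟩ * C j c b := by
  classical
  rw [Matrix.mul_apply, ← Finset.univ_sigma_univ, Finset.sum_sigma]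
  rw [Finset.sum_eq_single j]
  · simp
  · intro k _ hk
    apply Finset.sum_eq_zero
    intro c _
    rw [blockDiagonal'_apply_ne _ _ _ hk, mul_zero]
  · simp

/-- for a block-diagonal pair `(C, D)` under contragredient equivalence,
the versality condition of a simple deformation with parameter positions `ZP` (in the
first matrix) and `ZQ` (in the second) holds globally iff it holds blockwise. -/
theorem versality_condition_decomposes {t : ℕ} (m n : Fin t → ℕ)
    (C : (i : Fin t) → Matrix (Fin (m i)) (Fin (n i)) ℂ)
    (D : (i : Fin t) → Matrix (Fin (n i)) (Fin (m i)) ℂ)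
    (ZP : Set (((i : Fin t) × Fin (m i)) × ((i : Fin t) × Fin (n i))))
    (ZQ : Set (((i : Fin t) × Fin (n i)) × ((i : Fin t) × Fin (m i)))) :
    (∀ (M : Matrix ((i : Fin t) × Fin (m i)) ((i : Fin t) × Fin (n i)) ℂ)
       (N : Matrix ((i : Fin t) × Fin (n i)) ((i : Fin t) × Fin (m i)) ℂ),
       ∃ (S : Matrix ((i : Fin t) × Fin (m i)) ((i : Fin t) × Fin (m i)) ℂ)
         (R : Matrix ((i : Fin t) × Fin (n i)) ((i : Fin t) × Fin (n i)) ℂ)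
         (P : Matrix ((i : Fin t) × Fin (m i)) ((i : Fin t) × Fin (n i)) ℂ)
         (Q : Matrix ((i : Fin t) × Fin (n i)) ((i : Fin t) × Fin (m i)) ℂ),
         (∀ p q, P p q ≠ 0 → (p, q) ∈ ZP) ∧
         (∀ p q, Q p q ≠ 0 → (p, q) ∈ ZQ) ∧
         M + (Matrix.blockDiagonal' C * R - S * Matrix.blockDiagonal' C) = P ∧
         N + (Matrix.blockDiagonal' D * S - R * Matrix.blockDiagonal' D) = Q)
    ↔
    (∀ (i j : Fin t)
       (Mij : Matrix (Fin (m i)) (Fin (n j)) ℂ)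
       (Nij : Matrix (Fin (n i)) (Fin (m j)) ℂ),
       ∃ (Sij : Matrix (Fin (m i)) (Fin (m j)) ℂ)
         (Rij : Matrix (Fin (n i)) (Fin (n j)) ℂ)
         (Pij : Matrix (Fin (m i)) (Fin (n j)) ℂ)
         (Qij : Matrix (Fin (n i)) (Fin (m j)) ℂ),
         (∀ a b, Pij a b ≠ 0 →
           ((⟨i, a⟩ : (i : Fin t) × Fin (m i)), (⟨j, b⟩ : (i : Fin t) × Fin (n i))) ∈ ZP) ∧
         (∀ a b, Qij a b ≠ 0 →
           ((⟨i, a⟩ : (i : Fin t) × Fin (n i)), (⟨j, b⟩ : (i : Fin t) × Fin (m i))) ∈ ZQ) ∧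
         Mij + (C i * Rij - Sij * C j) = Pij ∧
         Nij + (D i * Sij - Rij * D j) = Qij) := by
  constructor
  · intro h i j Mij Nij
    classical
    set M : Matrix ((i : Fin t) × Fin (m i)) ((i : Fin t) × Fin (n i)) ℂ :=
      fun p q => if h : p.1 = i ∧ q.1 = j then Mij (h.1 ▸ p.2) (h.2 ▸ q.2) else 0 with hM
    set N : Matrix ((i : Fin t) × Fin (n i)) ((i : Fin t) × Fin (m i)) ℂ :=
      fun p q => if h : p.1 = i ∧ q.1 = j then Nij (h.1 ▸ p.2) (h.2 ▸ q.2) else 0 with hN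
    obtain ⟨S, R, P, Q, hP, hQ, e1, e2⟩ := h M N
    refine ⟨fun a b => S ⟨i, a⟩ ⟨j, b⟩, fun a b => R ⟨i, a⟩ ⟨j, b⟩,
      fun a b => P ⟨i, a⟩ ⟨j, b⟩, fun a b => Q ⟨i, a⟩ ⟨j, b⟩,
      fun a b hz => hP _ _ hz, fun a b hz => hQ _ _ hz, ?_, ?_⟩
    · ext a b
      have := congrFun (congrFun e1 ⟨i, a⟩) ⟨j, b⟩
      rw [Matrix.add_apply, Matrix.sub_apply, bd_mul_apply, mul_bd_apply] at this
      simp [hM] at this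
      exact this
    · ext a b
      have := congrFun (congrFun e2 ⟨i, a⟩) ⟨j, b⟩
      rw [Matrix.add_apply, Matrix.sub_apply, bd_mul_apply, mul_bd_apply] at this
      simp [hN] at this
      exact this
  · intro h M N
    classical
    have H := fun i j => h i j (fun a b => M ⟨i, a⟩ ⟨j, b⟩) (fun a b => N ⟨i, a⟩ ⟨j, b⟩)
    choose S R P Q hP hQ e1 e2 using H
    refine ⟨fun p q => S p.1 q.1 p.2 q.2, fun p q => R p.1 q.1 p.2 q.2,
      fun p q => P p.1 q.1 p.2 q.2, fun p q => Q p.1 q.1 p.2 q.2, ?_, ?_, ?_, ?_⟩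
    · rintro ⟨i, a⟩ ⟨j, b⟩ hz
      exact hP i j a b hz
    · rintro ⟨i, a⟩ ⟨j, b⟩ hz
      exact hQ i j a b hz
    · ext ⟨i, a⟩ ⟨j, b⟩
      have := congrFun (congrFun (e1 i j) a) b
      erw [Matrix.add_apply, Matrix.sub_apply, bd_mul_apply, mul_bd_apply]
      exact this
    · ext ⟨i, a⟩ ⟨j, b⟩
      have := congrFun (congrFun (e2 i j) a) b
      erw [Matrix.add_apply, Matrix.sub_apply, bd_mul_apply, mul_bd_apply]
      exact this
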